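/- Let (x_k) in a normed space satisfy x_{k+1} = (1-ρ_{k+1}) x_k + ρ_{k+1} x̂_{k+1} with (x̂_k) bounded, ρ_k ∈ (0,1), ρ_k → 0, ∑ ρ_k = ∞, ∑ ρ_k² < ∞, and suppose ‖x̂_{k+1} - x̂_k‖ ≤ L‖x_k - x_{k-1}‖ + c_k with ∑ c_k < ∞ and L ≥ 0. Then ‖x_{k+1} - x_k‖ → 0. -/
import Mathlib


open Filter

/-- Asymptotic stationarity of the averaged iterates: under the inertial
update with diminishing, non-summable-but-square-summable step sizes, and a
Lipschitz-plus-summable-perturbation bound on the increments of the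
market-clearing solutions `x̂`, the successive differences of the iterates
vanish. -/
theorem stmt_6 {E : Type*} [NormedAddCommGroup E] [NormedSpace ℝ E]
    (x xhat : ℕ → E) (ρ : ℕ → ℝ) (c : ℕ → ℝ) (L : ℝ)
    (hL : 0 ≤ L)
    (hρ : ∀ k, ρ k ∈ Set.Ioo (0 : ℝ) 1)
    (hρ0 : Tendsto ρ atTop (nhds 0))
    (hρdiv : Tendsto (fun n => ∑ k ∈ Finset.range n, ρ k) atTop atTop)
    (hρsq : Summable (fun k => ρ k ^ 2))
    (hbdd : ∃ C, ∀ k, ‖xhat k‖ ≤ C)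
    (hcsum : Summable c)
    (hrec : ∀ k, x (k + 1) = (1 - ρ (k + 1)) • x k + ρ (k + 1) • xhat (k + 1))
    (hlip : ∀ k, ‖xhat (k + 2) - xhat (k + 1)‖ ≤ L * ‖x (k + 1) - x k‖ + c k) :
    Tendsto (fun k => ‖x (k + 1) - x k‖) atTop (nhds 0) := by
  obtain ⟨C, hC⟩ := hbdd
  set M : ℝ := max ‖x 0‖ C with hM
  have hxM : ∀ k, ‖x k‖ ≤ M := by
    intro k
    induction k with
    | zero => exact le_max_left _ _
    | succ n ih =>
      obtain ⟨h1, h2⟩ := hρ (n + 1)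
      have hxh : ‖xhat (n + 1)‖ ≤ M := le_trans (hC _) (le_max_right _ _)
      calc ‖x (n + 1)‖ ≤ ‖(1 - ρ (n + 1)) • x n‖ + ‖ρ (n + 1) • xhat (n + 1)‖ := by
            rw [hrec n]; exact norm_add_le _ _
        _ = (1 - ρ (n + 1)) * ‖x n‖ + ρ (n + 1) * ‖xhat (n + 1)‖ := by
            rw [norm_smul, norm_smul, Real.norm_of_nonneg (by linarith),
              Real.norm_of_nonneg h1.le]
        _ ≤ (1 - ρ (n + 1)) * M + ρ (n + 1) * M := by
            have := h1.le
            gcongr <;> linarith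
        _ = M := by ring
  have hkey : ∀ k, ‖x (k + 1) - x k‖ ≤ ρ (k + 1) * (2 * M) := by
    intro k
    have hd : x (k + 1) - x k = ρ (k + 1) • (xhat (k + 1) - x k) := by
      rw [hrec k]; module
    rw [hd, norm_smul, Real.norm_of_nonneg (hρ (k + 1)).1.le]
    have : ‖xhat (k + 1) - x k‖ ≤ 2 * M := by
      calc ‖xhat (k + 1) - x k‖ ≤ ‖xhat (k + 1)‖ + ‖x k‖ := norm_sub_le _ _
        _ ≤ M + M := add_le_add (le_trans (hC _) (le_max_right _ _)) (hxM k)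
        _ = 2 * M := by ring
    exact mul_le_mul_of_nonneg_left this (hρ (k + 1)).1.le
  have hρ1 : Tendsto (fun k => ρ (k + 1) * (2 * M)) atTop (nhds 0) := by
    have := (hρ0.comp (tendsto_add_atTop_nat 1)).mul_const (2 * M)
    simpa using this
  exact squeeze_zero (fun k => norm_nonneg _) hkey hρ1
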